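/- Let μ be a doubling measure on ℂ such that μ(D(z,R)) = 1 defines a positive radius ρ(z) for each z (e.g. μ = Δφ for φ subharmonic with doubling Laplacian). Then there exists γ > 0 depending only on the doubling constant of μ such that for every z ∈ ℂ and every r > 1, one has r^γ ≲ μ(D(z, rρ(z))) ≲ r^{1/γ}, with implicit constants depending only on the doubling constant of μ. -/

import Mathlib

open MeasureTheory Metric Complex Filter

noncomputable section

/-- `μ` is doubling with doubling constant (at most) `Cd`. -/
def DoublingWith (μ : Measure ℂ) (Cd : ℝ) : Prop :=
  ∀ z : ℂ, ∀ r : ℝ, 0 < r → μ (ball z (2 * r)) ≤ ENNReal.ofReal Cd * μ (ball z r)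

/-- `ρ z` is the positive radius such that `μ (D(z, ρ z)) = 1`. -/
def IsRadiusFn (μ : Measure ℂ) (ρ : ℂ → ℝ) : Prop :=
  ∀ z : ℂ, 0 < ρ z ∧ μ (ball z (ρ z)) = 1

lemma iterA {μ : Measure ℂ} {Cd : ℝ} (h : DoublingWith μ Cd) (z : ℂ) {r : ℝ} (hr : 0 < r) (n : ℕ) :
    μ (ball z (2 ^ n * r)) ≤ ENNReal.ofReal Cd ^ n * μ (ball z r) := by
  induction n with
  | zero => simp
  | succ n ih =>
      have h2 : (2:ℝ) ^ (n+1) * r = 2 * (2 ^ n * r) := by ring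
      rw [h2]
      calc μ (ball z (2 * (2 ^ n * r))) ≤ ENNReal.ofReal Cd * μ (ball z (2 ^ n * r)) :=
            h z _ (by positivity)
        _ ≤ ENNReal.ofReal Cd * (ENNReal.ofReal Cd ^ n * μ (ball z r)) := mul_le_mul_right ih _
        _ = ENNReal.ofReal Cd ^ (n+1) * μ (ball z r) := by ring

lemma revDoubling {μ : Measure ℂ} {Cd : ℝ} (h : DoublingWith μ Cd) (hCd : 0 < Cd)
    (z : ℂ) {r : ℝ} (hr : 0 < r) :
    (1 + (ENNReal.ofReal Cd ^ 3)⁻¹) * μ (ball z r) ≤ μ (ball z (2 * r)) := by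
  set w : ℂ := z + ((3 * r / 2 : ℝ) : ℂ) with hw
  have hdist : dist z w = 3 * r / 2 := by
    rw [Complex.dist_eq]
    have : z - w = -((3 * r / 2 : ℝ) : ℂ) := by rw [hw]; ring
    rw [this, norm_neg, Complex.norm_real, Real.norm_eq_abs, abs_of_pos (by linarith)]
  have hdisj : Disjoint (ball z r) (ball w (r/2)) := by
    apply ball_disjoint_ball
    rw [hdist]; linarith
  have hsub1 : ball w (r/2) ⊆ ball z (2*r) := by
    apply ball_subset_ball'
    rw [dist_comm, hdist]; linarith
  have hsub2 : ball z r ⊆ ball w (4*r) := by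
    apply ball_subset_ball'
    rw [hdist]; linarith
  set k : ENNReal := ENNReal.ofReal Cd ^ 3 with hk
  have hk0 : k ≠ 0 := by
    apply pow_ne_zero
    simp [ENNReal.ofReal_eq_zero]; linarith
  have hktop : k ≠ ⊤ := by
    exact ENNReal.pow_ne_top ENNReal.ofReal_ne_top
  have ha : μ (ball z r) ≤ k * μ (ball w (r/2)) := by
    calc μ (ball z r) ≤ μ (ball w (4*r)) := measure_mono hsub2
      _ = μ (ball w (2^3 * (r/2))) := by norm_num; ring_nf
      _ ≤ k * μ (ball w (r/2)) := iterA h w (by positivity) 3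
  have hb : k⁻¹ * μ (ball z r) ≤ μ (ball w (r/2)) := by
    calc k⁻¹ * μ (ball z r) ≤ k⁻¹ * (k * μ (ball w (r/2))) := mul_le_mul_right ha _
      _ = (k⁻¹ * k) * μ (ball w (r/2)) := (mul_assoc _ _ _).symm
      _ = μ (ball w (r/2)) := by rw [ENNReal.inv_mul_cancel hk0 hktop, one_mul]
  calc (1 + k⁻¹) * μ (ball z r) = μ (ball z r) + k⁻¹ * μ (ball z r) := by ring
    _ ≤ μ (ball z r) + μ (ball w (r/2)) := add_le_add_right hb _
    _ = μ (ball z r ∪ ball w (r/2)) := (measure_union hdisj measurableSet_ball).symm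
    _ ≤ μ (ball z (2*r)) := measure_mono (Set.union_subset (ball_subset_ball (by linarith)) hsub1)

lemma iterC {μ : Measure ℂ} {Cd : ℝ} (h : DoublingWith μ Cd) (hCd : 0 < Cd)
    (z : ℂ) {ρz : ℝ} (hρ : 0 < ρz) (n : ℕ) :
    (1 + (ENNReal.ofReal Cd ^ 3)⁻¹) ^ n * μ (ball z ρz) ≤ μ (ball z (2 ^ n * ρz)) := by
  induction n with
  | zero => simp
  | succ n ih =>
      have h2 : (2:ℝ) ^ (n+1) * ρz = 2 * (2 ^ n * ρz) := by ring
      rw [h2]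
      calc (1 + (ENNReal.ofReal Cd ^ 3)⁻¹) ^ (n+1) * μ (ball z ρz)
          = (1 + (ENNReal.ofReal Cd ^ 3)⁻¹) * ((1 + (ENNReal.ofReal Cd ^ 3)⁻¹) ^ n * μ (ball z ρz)) := by ring
        _ ≤ (1 + (ENNReal.ofReal Cd ^ 3)⁻¹) * μ (ball z (2 ^ n * ρz)) := mul_le_mul_right ih _
        _ ≤ μ (ball z (2 * (2 ^ n * ρz))) := revDoubling h hCd z (by positivity)

lemma rpow_logb_comm {x y : ℝ} (hx : 0 < x) (hy : 0 < y) :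
    x ^ Real.logb 2 y = y ^ Real.logb 2 x := by
  have e1 : (2:ℝ) ^ Real.logb 2 y = y := Real.rpow_logb two_pos (by norm_num) hy
  have e2 : (2:ℝ) ^ Real.logb 2 x = x := Real.rpow_logb two_pos (by norm_num) hx
  calc x ^ Real.logb 2 y = ((2:ℝ) ^ Real.logb 2 x) ^ Real.logb 2 y := by rw [e2]
    _ = (2:ℝ) ^ (Real.logb 2 x * Real.logb 2 y) := (Real.rpow_mul (by norm_num) _ _).symm
    _ = (2:ℝ) ^ (Real.logb 2 y * Real.logb 2 x) := by rw [mul_comm]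
    _ = ((2:ℝ) ^ Real.logb 2 y) ^ Real.logb 2 x := Real.rpow_mul (by norm_num) _ _
    _ = y ^ Real.logb 2 x := by rw [e1]


/-- for a doubling measure `μ` with unit-mass radius function `ρ`,
there is `γ > 0` depending only on the doubling constant such that
`r^γ ≲ μ(D(z, rρ(z))) ≲ r^{1/γ}` for every `z ∈ ℂ` and `r > 1`. -/
theorem doubling_measure_dilated_ball_growth :
    ∀ Cd : ℝ, ∃ γ c C : ℝ, 0 < γ ∧ 0 < c ∧ 0 < C ∧
      ∀ (μ : Measure ℂ) (ρ : ℂ → ℝ), DoublingWith μ Cd → IsRadiusFn μ ρ →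
        ∀ z : ℂ, ∀ r : ℝ, 1 < r →
          ENNReal.ofReal (c * r ^ γ) ≤ μ (ball z (r * ρ z)) ∧
            μ (ball z (r * ρ z)) ≤ ENNReal.ofReal (C * r ^ (1 / γ)) := by
  intro Cd
  rcases le_or_gt Cd 1 with hCd | hCd
  · -- degenerate: hypotheses are contradictory
    refine ⟨1, 1, 1, one_pos, one_pos, one_pos, ?_⟩
    intro μ ρ hd hρ z r hr
    exfalso
    obtain ⟨hρ0, h1⟩ := hρ 0
    have hmono : (1:ENNReal) ≤ μ (ball 0 (2 * ρ 0)) := by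
      rw [← h1]; exact measure_mono (ball_subset_ball (by linarith))
    rcases le_or_gt Cd 0 with hCd0 | hCd0
    · have := hd 0 (ρ 0) hρ0
      rw [h1, ENNReal.ofReal_eq_zero.mpr hCd0, zero_mul] at this
      exact absurd (le_trans hmono this) (by simp)
    · -- 0 < Cd ≤ 1 : reverse doubling forces mass ≥ 2 but doubling caps at Cd ≤ 1
      have hrev := revDoubling (μ := μ) hd hCd0 0 hρ0
      rw [h1, mul_one] at hrev
      have hub := hd 0 (ρ 0) hρ0
      rw [h1, mul_one] at hub
      have hCd1 : ENNReal.ofReal Cd ≤ 1 := by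
        rw [← ENNReal.ofReal_one]; exact ENNReal.ofReal_le_ofReal hCd
      have hk1 : ENNReal.ofReal Cd ^ 3 ≤ 1 := pow_le_one₀ zero_le hCd1
      have hinv : (1:ENNReal) ≤ (ENNReal.ofReal Cd ^ 3)⁻¹ :=
        ENNReal.one_le_inv.mpr hk1
      have h2 : (2:ENNReal) ≤ 1 + (ENNReal.ofReal Cd ^ 3)⁻¹ := by
        calc (2:ENNReal) = 1 + 1 := by norm_num
          _ ≤ 1 + (ENNReal.ofReal Cd ^ 3)⁻¹ := add_le_add_right hinv _
      have : (2:ENNReal) ≤ 1 := le_trans (le_trans h2 hrev) (le_trans hub hCd1)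
      norm_num at this
  · -- main case Cd > 1
    have hCd0 : 0 < Cd := by linarith
    set t : ℝ := 1 + (Cd^3)⁻¹ with htdef
    have ht1 : 1 < t := by
      have : 0 < (Cd^3)⁻¹ := by positivity
      simp only [htdef]; linarith
    have ht0 : 0 < t := by linarith
    set α : ℝ := Real.logb 2 t with hαdef
    set β : ℝ := Real.logb 2 Cd with hβdef
    have hαpos : 0 < α := Real.logb_pos one_lt_two ht1
    have hβpos : 0 < β := Real.logb_pos one_lt_two hCd
    refine ⟨min α (1/β), t⁻¹, Cd, lt_min hαpos (by positivity), by positivity, hCd0, ?_⟩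
    set γ : ℝ := min α (1/β) with hγdef
    have hγpos : 0 < γ := lt_min hαpos (by positivity)
    have hβγ : β ≤ 1/γ := by
      have := one_div_le_one_div_of_le hγpos (min_le_right α (1/β))
      rwa [one_div_one_div] at this
    intro μ ρ hd hρ z r hr
    obtain ⟨hρz, h1⟩ := hρ z
    have hr0 : 0 < r := by linarith
    set n : ℕ := ⌊Real.logb 2 r⌋₊ with hndef
    have hlogr : 0 ≤ Real.logb 2 r := (Real.logb_pos one_lt_two hr).le
    have hn1 : (n:ℝ) ≤ Real.logb 2 r := Nat.floor_le hlogr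
    have hn2 : Real.logb 2 r < (n:ℝ) + 1 := Nat.lt_floor_add_one _
    have hrlog : (2:ℝ) ^ Real.logb 2 r = r := Real.rpow_logb two_pos (by norm_num) hr0
    have h2n : (2:ℝ) ^ n ≤ r := by
      calc (2:ℝ) ^ n = (2:ℝ) ^ (n:ℝ) := (Real.rpow_natCast 2 n).symm
        _ ≤ (2:ℝ) ^ Real.logb 2 r := Real.rpow_le_rpow_of_exponent_le one_le_two hn1
        _ = r := hrlog
    have hr2 : r ≤ (2:ℝ) ^ (n+1) := by
      calc r = (2:ℝ) ^ Real.logb 2 r := hrlog.symm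
        _ ≤ (2:ℝ) ^ ((n:ℝ)+1) := Real.rpow_le_rpow_of_exponent_le one_le_two hn2.le
        _ = (2:ℝ) ^ (n+1) := by rw [← Real.rpow_natCast 2 (n+1)]; push_cast; ring_nf
    -- identify the ENNReal reverse-doubling factor with ofReal t
    have hT : (1 + (ENNReal.ofReal Cd ^ 3)⁻¹) = ENNReal.ofReal t := by
      rw [htdef, ENNReal.ofReal_add zero_le_one (by positivity), ENNReal.ofReal_one,
        ENNReal.ofReal_inv_of_pos (by positivity), ENNReal.ofReal_pow hCd0.le]
    constructor
    · -- lower bound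
      have hlow : ENNReal.ofReal t ^ n ≤ μ (ball z (r * ρ z)) := by
        calc ENNReal.ofReal t ^ n = (1 + (ENNReal.ofReal Cd ^ 3)⁻¹) ^ n * μ (ball z (ρ z)) := by
              rw [hT, h1, mul_one]
          _ ≤ μ (ball z (2 ^ n * ρ z)) := iterC hd hCd0 z hρz n
          _ ≤ μ (ball z (r * ρ z)) := measure_mono (ball_subset_ball
              (mul_le_mul_of_nonneg_right h2n hρz.le))
      refine le_trans ?_ hlow
      rw [← ENNReal.ofReal_pow ht0.le]
      apply ENNReal.ofReal_le_ofReal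
      calc t⁻¹ * r ^ γ ≤ t⁻¹ * r ^ α := by
            apply mul_le_mul_of_nonneg_left _ (by positivity)
            exact Real.rpow_le_rpow_of_exponent_le hr.le (min_le_left _ _)
        _ = t⁻¹ * t ^ Real.logb 2 r := by rw [hαdef, rpow_logb_comm hr0 ht0]
        _ = t ^ (Real.logb 2 r - 1) := by
            rw [Real.rpow_sub ht0, Real.rpow_one]; ring
        _ ≤ t ^ (n:ℝ) := Real.rpow_le_rpow_of_exponent_le ht1.le (by linarith)
        _ = t ^ n := Real.rpow_natCast t n
    · -- upper bound
      have hup : μ (ball z (r * ρ z)) ≤ ENNReal.ofReal (Cd ^ (n+1)) := by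
        calc μ (ball z (r * ρ z)) ≤ μ (ball z (2 ^ (n+1) * ρ z)) := measure_mono
              (ball_subset_ball (mul_le_mul_of_nonneg_right hr2 hρz.le))
          _ ≤ ENNReal.ofReal Cd ^ (n+1) * μ (ball z (ρ z)) := iterA hd z hρz (n+1)
          _ = ENNReal.ofReal (Cd ^ (n+1)) := by rw [h1, mul_one, ENNReal.ofReal_pow hCd0.le]
      refine le_trans hup (ENNReal.ofReal_le_ofReal ?_)
      calc Cd ^ (n+1) = Cd * Cd ^ n := by ring
        _ ≤ Cd * r ^ (1/γ) := by
            apply mul_le_mul_of_nonneg_left _ hCd0.le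
            calc Cd ^ n = Cd ^ (n:ℝ) := (Real.rpow_natCast Cd n).symm
              _ ≤ Cd ^ Real.logb 2 r := Real.rpow_le_rpow_of_exponent_le hCd.le hn1
              _ = r ^ β := by rw [hβdef, rpow_logb_comm hCd0 hr0]
              _ ≤ r ^ (1/γ) := Real.rpow_le_rpow_of_exponent_le hr.le hβγ
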